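/- arXiv:1908.10646 — 4 statements merged into one kernel-verified Lean document; each statement's English description precedes it below -/
import Mathlib

section
/- Let Y be a non-negative random variable and suppose that for all c, d > 0, P(Y > c) ≤ (1/c)·E[Z ∧ d] + P(Z ≥ d) for a non-negative random variable Z. Then for every p ∈ (0,1), E[Y^p] ≤ (p^{-p}/(1-p))·E[Z^p]. -/
open MeasureTheory Set
open scoped ENNReal

lemma aux_Ioc {r : ℝ} (hr : -1 < r) {b : ℝ} (hb : 0 ≤ b) :
    ∫⁻ c in Ioc (0:ℝ) b, ENNReal.ofReal (c ^ r) = ENNReal.ofReal (b ^ (r+1) / (r+1)) := by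
  have hint : IntegrableOn (fun c : ℝ => c ^ r) (Ioc 0 b) := by
    have := intervalIntegral.intervalIntegrable_rpow' (a := 0) (b := b) hr
    rwa [intervalIntegrable_iff, uIoc_of_le hb] at this
  rw [← ofReal_integral_eq_lintegral_ofReal hint ?nn]
  case nn =>
    filter_upwards [ae_restrict_mem measurableSet_Ioc] with c hc
    exact Real.rpow_nonneg hc.1.le r
  congr 1
  rw [← intervalIntegral.integral_of_le hb, integral_rpow (Or.inl hr),
    Real.zero_rpow (by linarith), sub_zero]

lemma aux_Ioi {r : ℝ} (hr : r < -1) {b : ℝ} (hb : 0 < b) :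
    ∫⁻ c in Ioi b, ENNReal.ofReal (c ^ r) = ENNReal.ofReal (-b ^ (r+1) / (r+1)) := by
  rw [← ofReal_integral_eq_lintegral_ofReal (integrableOn_Ioi_rpow_of_lt hr hb) ?nn]
  case nn =>
    filter_upwards [ae_restrict_mem measurableSet_Ioi] with c hc
    exact Real.rpow_nonneg (hb.trans hc).le r
  rw [integral_Ioi_rpow_of_lt hr hb]

lemma aux_div (r : ℝ) : ∫⁻ c in Ioi (0:ℝ), ENNReal.ofReal (c ^ r) = ∞ := by
  by_contra h
  apply not_integrableOn_Ioi_rpow r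
  constructor
  · exact (Measurable.aestronglyMeasurable (by fun_prop))
  · rw [hasFiniteIntegral_iff_ofReal ?nn]
    · exact lt_top_iff_ne_top.2 h
    case nn =>
      filter_upwards [ae_restrict_mem measurableSet_Ioi] with c hc
      exact Real.rpow_nonneg hc.le r

lemma aux_HA {p : ℝ} (hp0 : 0 < p) {b : ℝ} (hb : 0 ≤ b) :
    ∫⁻ c in Ioc (0:ℝ) b, ENNReal.ofReal (p * c ^ (p-1)) = ENNReal.ofReal (b ^ p) := by
  simp_rw [ENNReal.ofReal_mul hp0.le]
  rw [lintegral_const_mul' _ _ ENNReal.ofReal_ne_top, aux_Ioc (by linarith) hb,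
    ← ENNReal.ofReal_mul hp0.le, show p - 1 + 1 = p by ring]
  congr 1
  field_simp

lemma P1 {p : ℝ} (hp0 : 0 < p) (hp1 : p < 1) (x : ℝ≥0∞) :
    x ^ p ≤ ∫⁻ c in Ioi (0:ℝ), (if ENNReal.ofReal c < x then ENNReal.ofReal (p * c ^ (p-1)) else 0) := by
  rcases eq_or_ne x ⊤ with rfl | hx
  · rw [ENNReal.top_rpow_of_pos hp0, top_le_iff]
    have key : ∀ c : ℝ, (if ENNReal.ofReal c < (⊤:ℝ≥0∞) then ENNReal.ofReal (p * c ^ (p-1)) else 0)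
        = ENNReal.ofReal p * ENNReal.ofReal (c ^ (p-1)) := by
      intro c; rw [if_pos ENNReal.ofReal_lt_top, ENNReal.ofReal_mul hp0.le]
    simp_rw [key]
    rw [lintegral_const_mul' _ _ ENNReal.ofReal_ne_top, aux_div,
      ENNReal.mul_top (ENNReal.ofReal_pos.2 hp0).ne']
  · have ha0 : 0 ≤ x.toReal := ENNReal.toReal_nonneg
    have hxa : x = ENNReal.ofReal x.toReal := (ENNReal.ofReal_toReal hx).symm
    rw [hxa, setLIntegral_congr_fun measurableSet_Ioi
      (g := (Iio x.toReal).indicator (fun c => ENNReal.ofReal (p * c ^ (p-1)))) ?_]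
    · rw [lintegral_indicator measurableSet_Iio, Measure.restrict_restrict measurableSet_Iio,
        Set.Iio_inter_Ioi, setLIntegral_congr Ioo_ae_eq_Ioc, aux_HA hp0 ha0,
        ENNReal.ofReal_rpow_of_nonneg ha0 hp0.le]
    · intro c hc
      rw [Set.indicator_apply]
      refine if_congr ?_ rfl rfl
      rw [Set.mem_Iio]
      exact ENNReal.ofReal_lt_ofReal_iff_of_nonneg hc.le

lemma P2 {p : ℝ} (hp0 : 0 < p) (hp1 : p < 1) (z : ℝ≥0∞) :
    (∫⁻ c in Ioi (0:ℝ), if ENNReal.ofReal (p*c) ≤ z then ENNReal.ofReal (p * c ^ (p-1)) else 0)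
      ≤ ENNReal.ofReal (p ^ (-p)) * z ^ p := by
  rcases eq_or_ne z ⊤ with rfl | hz
  · rw [ENNReal.top_rpow_of_pos hp0,
      ENNReal.mul_top (ENNReal.ofReal_pos.2 (Real.rpow_pos_of_pos hp0 _)).ne']
    exact le_top
  · have ha0 : 0 ≤ z.toReal := ENNReal.toReal_nonneg
    have hxa : z = ENNReal.ofReal z.toReal := (ENNReal.ofReal_toReal hz).symm
    rw [hxa, setLIntegral_congr_fun measurableSet_Ioi
      (g := (Iic (z.toReal / p)).indicator (fun c => ENNReal.ofReal (p * c ^ (p-1)))) ?_]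
    · rw [lintegral_indicator measurableSet_Iic, Measure.restrict_restrict measurableSet_Iic,
        Set.inter_comm, Set.Ioi_inter_Iic, aux_HA hp0 (div_nonneg ha0 hp0.le),
        ENNReal.ofReal_rpow_of_nonneg ha0 hp0.le, ← ENNReal.ofReal_mul
          (Real.rpow_nonneg hp0.le _)]
      apply ENNReal.ofReal_le_ofReal
      rw [Real.div_rpow ha0 hp0.le, Real.rpow_neg hp0.le]
      ring_nf
      exact le_refl _
    · intro c hc
      rw [Set.indicator_apply]
      refine if_congr ?_ rfl rfl
      rw [Set.mem_Iic, ENNReal.ofReal_le_ofReal_iff ha0, le_div_iff₀ hp0, mul_comm]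

lemma P3 {p : ℝ} (hp0 : 0 < p) (hp1 : p < 1) (z : ℝ≥0∞) :
    (∫⁻ c in Ioi (0:ℝ), min z (ENNReal.ofReal (p*c)) * ENNReal.ofReal (p * c ^ (p-2)))
      ≤ ENNReal.ofReal (p ^ (1-p) / (1-p)) * z ^ p := by
  have hmono : Monotone ENNReal.ofReal := fun _ _ h => ENNReal.ofReal_le_ofReal h
  rcases eq_or_ne z ⊤ with rfl | hz
  · rw [ENNReal.top_rpow_of_pos hp0, ENNReal.mul_top
      (ENNReal.ofReal_pos.2 (div_pos (Real.rpow_pos_of_pos hp0 _) (by linarith))).ne']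
    exact le_top
  · rcases eq_or_ne z 0 with rfl | hz0
    · simp
    have ha' : 0 < z.toReal := ENNReal.toReal_pos hz0 hz
    set a := z.toReal with hadef
    have hxa : z = ENNReal.ofReal a := (ENNReal.ofReal_toReal hz).symm
    have hb : 0 < a / p := div_pos ha' hp0
    rw [hxa, setLIntegral_congr_fun measurableSet_Ioi
      (g := fun c => ENNReal.ofReal (min a (p*c) * (p * c ^ (p-2)))) ?_]
    · rw [← Set.Ioc_union_Ioi_eq_Ioi hb.le, lintegral_union measurableSet_Ioi
        Set.Ioc_disjoint_Ioi_same]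
      have e1 : ∫⁻ c in Ioc 0 (a/p), ENNReal.ofReal (min a (p*c) * (p * c ^ (p-2)))
          = ENNReal.ofReal (p * (a/p) ^ p) := by
        rw [setLIntegral_congr_fun measurableSet_Ioc
          (g := fun c => ENNReal.ofReal p * ENNReal.ofReal (p * c ^ (p-1))) ?_]
        · rw [lintegral_const_mul' _ _ ENNReal.ofReal_ne_top, aux_HA hp0 hb.le,
            ← ENNReal.ofReal_mul hp0.le]
        · intro c hc
          have hc0 : 0 < c := hc.1
          have hmin : min a (p*c) = p*c :=
            min_eq_right (by rw [← le_div_iff₀' hp0]; exact hc.2)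
          dsimp only
          rw [hmin, ← ENNReal.ofReal_mul hp0.le]
          congr 1
          rw [show p - 1 = 1 + (p-2) by ring, Real.rpow_add hc0, Real.rpow_one]
          ring
      have e2 : ∫⁻ c in Ioi (a/p), ENNReal.ofReal (min a (p*c) * (p * c ^ (p-2)))
          = ENNReal.ofReal ((a * p) * (-(a/p) ^ (p-1) / (p-1))) := by
        rw [setLIntegral_congr_fun measurableSet_Ioi
          (g := fun c => ENNReal.ofReal (a * p) * ENNReal.ofReal (c ^ (p-2))) ?_]
        · rw [lintegral_const_mul' _ _ ENNReal.ofReal_ne_top, aux_Ioi (by linarith) hb,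
            ← ENNReal.ofReal_mul (mul_nonneg ha'.le hp0.le), show p - 2 + 1 = p - 1 by ring]
        · intro c hc
          have hc0 : 0 < c := hb.trans hc
          have hmin : min a (p*c) = a :=
            min_eq_left (by rw [← div_le_iff₀' hp0]; exact (mem_Ioi.1 hc).le)
          dsimp only
          rw [hmin, ← ENNReal.ofReal_mul (mul_nonneg ha'.le hp0.le)]
          congr 1
          ring
      rw [e1, e2, ← ENNReal.ofReal_add (mul_nonneg hp0.le (Real.rpow_nonneg hb.le _)) ?nn2,
        ENNReal.ofReal_rpow_of_nonneg ha'.le hp0.le,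
        ← ENNReal.ofReal_mul (div_nonneg (Real.rpow_nonneg hp0.le _) (by linarith))]
      case nn2 =>
        have h1 : (0:ℝ) < -(a/p) ^ (p-1) / (p-1) := by
          apply div_pos_of_neg_of_neg
          · simp only [neg_neg, Left.neg_neg_iff]
            exact Real.rpow_pos_of_pos hb _
          · linarith
        positivity
      apply ENNReal.ofReal_le_ofReal
      apply le_of_eq
      have hppne : (p : ℝ) ^ (p : ℝ) ≠ 0 := (Real.rpow_pos_of_pos hp0 _).ne'
      rw [Real.div_rpow ha'.le hp0.le, Real.div_rpow ha'.le hp0.le,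
        show a ^ (p-1) = a ^ p / a by rw [Real.rpow_sub ha', Real.rpow_one],
        show (p:ℝ) ^ (p-1) = p ^ p / p by rw [Real.rpow_sub hp0, Real.rpow_one],
        show (p:ℝ) ^ (1-p) = p / p ^ p by rw [Real.rpow_sub hp0, Real.rpow_one]]
      field_simp [ha'.ne', hp0.ne', hppne, sub_ne_zero.mpr (show p ≠ 1 by linarith),
        sub_ne_zero.mpr (show (1:ℝ) ≠ p by linarith)]
      ring
    · intro c hc
      dsimp only
      rw [ENNReal.ofReal_mul (le_min ha'.le (mul_nonneg hp0.le (le_of_lt hc))),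
        hmono.map_min]

/-- If `Y`, `Z` are non-negative random variables with
`P(Y > c) ≤ c⁻¹ E[Z ∧ d] + P(Z ≥ d)` for all `c, d > 0`, then for `p ∈ (0,1)`,
`E[Y^p] ≤ (p^(-p)/(1-p)) E[Z^p]`. -/
theorem lenglart_tail_to_moment {Ω : Type*} {mΩ : MeasurableSpace Ω} (μ : Measure Ω)
    [IsProbabilityMeasure μ] (Y Z : Ω → ℝ≥0∞) (hY : Measurable Y) (hZ : Measurable Z)
    (h : ∀ c d : ℝ, 0 < c → 0 < d →
      μ {ω | ENNReal.ofReal c < Y ω}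
        ≤ (ENNReal.ofReal c)⁻¹ * ∫⁻ ω, min (Z ω) (ENNReal.ofReal d) ∂μ
          + μ {ω | ENNReal.ofReal d ≤ Z ω})
    (p : ℝ) (hp : p ∈ Set.Ioo (0:ℝ) 1) :
    ∫⁻ ω, Y ω ^ p ∂μ ≤ ENNReal.ofReal (p ^ (-p) / (1 - p)) * ∫⁻ ω, Z ω ^ p ∂μ := by
  obtain ⟨hp0, hp1⟩ := hp
  set A := ∫⁻ ω, Z ω ^ p ∂μ with hA
  set I : ℝ → ℝ≥0∞ := fun c => ∫⁻ ω, min (Z ω) (ENNReal.ofReal (p * c)) ∂μ with hI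
  -- Step 1: layer cake upper bound for Y
  have key1 : ∫⁻ ω, Y ω ^ p ∂μ
      ≤ ∫⁻ c in Ioi (0:ℝ), μ {ω | ENNReal.ofReal c < Y ω} * ENNReal.ofReal (p * c ^ (p-1)) := by
    have step : ∫⁻ ω, Y ω ^ p ∂μ ≤ ∫⁻ ω, (∫⁻ c in Ioi (0:ℝ),
        (if ENNReal.ofReal c < Y ω then ENNReal.ofReal (p * c ^ (p-1)) else 0)) ∂μ :=
      lintegral_mono fun ω => P1 hp0 hp1 (Y ω)
    rw [lintegral_lintegral_swap ?m1] at step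
    case m1 =>
      refine (Measurable.ite (measurableSet_lt (by fun_prop) (hY.comp measurable_fst))
        (by fun_prop) measurable_const).aemeasurable
    refine step.trans (le_of_eq (lintegral_congr fun c => ?_))
    have e : (fun ω => if ENNReal.ofReal c < Y ω then ENNReal.ofReal (p * c ^ (p-1)) else 0)
        = {ω | ENNReal.ofReal c < Y ω}.indicator fun _ => ENNReal.ofReal (p * c ^ (p-1)) := by
      ext ω; simp [Set.indicator_apply]
    rw [e, lintegral_indicator_const (measurableSet_lt measurable_const hY), mul_comm]
  -- Step 2: apply the hypothesis pointwise with d = p * c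
  have key2 : ∫⁻ c in Ioi (0:ℝ), μ {ω | ENNReal.ofReal c < Y ω} * ENNReal.ofReal (p * c ^ (p-1))
      ≤ ∫⁻ c in Ioi (0:ℝ), (I c * ENNReal.ofReal (p * c ^ (p-2))
          + μ {ω | ENNReal.ofReal (p*c) ≤ Z ω} * ENNReal.ofReal (p * c ^ (p-1))) := by
    refine lintegral_mono_ae ?_
    filter_upwards [ae_restrict_mem measurableSet_Ioi] with c hc
    have hc0 : (0:ℝ) < c := hc
    have hinv : (ENNReal.ofReal c)⁻¹ * ENNReal.ofReal (p * c ^ (p-1))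
        = ENNReal.ofReal (p * c ^ (p-2)) := by
      rw [← ENNReal.ofReal_inv_of_pos hc0, ← ENNReal.ofReal_mul (by positivity)]
      congr 1
      rw [show p - 1 = p - 2 + 1 by ring, Real.rpow_add hc0, Real.rpow_one]
      field_simp
    calc μ {ω | ENNReal.ofReal c < Y ω} * ENNReal.ofReal (p * c ^ (p-1))
        ≤ ((ENNReal.ofReal c)⁻¹ * I c + μ {ω | ENNReal.ofReal (p*c) ≤ Z ω})
            * ENNReal.ofReal (p * c ^ (p-1)) :=
          mul_le_mul_left (h c (p*c) hc0 (mul_pos hp0 hc0)) _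
      _ = I c * ((ENNReal.ofReal c)⁻¹ * ENNReal.ofReal (p * c ^ (p-1)))
            + μ {ω | ENNReal.ofReal (p*c) ≤ Z ω} * ENNReal.ofReal (p * c ^ (p-1)) := by ring
      _ = I c * ENNReal.ofReal (p * c ^ (p-2))
            + μ {ω | ENNReal.ofReal (p*c) ≤ Z ω} * ENNReal.ofReal (p * c ^ (p-1)) := by
          rw [hinv]
  -- split the sum
  have hmeasI : Measurable fun c : ℝ => I c * ENNReal.ofReal (p * c ^ (p-2)) := by
    refine Measurable.mul ?_ (by fun_prop)
    apply Measurable.lintegral_prod_right'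
      (f := fun q : ℝ × Ω => min (Z q.2) (ENNReal.ofReal (p * q.1)))
    fun_prop
  rw [lintegral_add_left hmeasI] at key2
  -- Step 3: first term (the truncated-expectation part)
  have key3 : ∫⁻ c in Ioi (0:ℝ), I c * ENNReal.ofReal (p * c ^ (p-2))
      ≤ ENNReal.ofReal (p ^ (1-p) / (1-p)) * A := by
    have e1 : ∫⁻ c in Ioi (0:ℝ), I c * ENNReal.ofReal (p * c ^ (p-2))
        = ∫⁻ c in Ioi (0:ℝ), (∫⁻ ω, min (Z ω) (ENNReal.ofReal (p * c))
            * ENNReal.ofReal (p * c ^ (p-2)) ∂μ) :=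
      lintegral_congr fun c => (lintegral_mul_const _ (by fun_prop)).symm
    rw [e1, lintegral_lintegral_swap (by fun_prop)]
    calc ∫⁻ ω, (∫⁻ c in Ioi (0:ℝ),
          min (Z ω) (ENNReal.ofReal (p * c)) * ENNReal.ofReal (p * c ^ (p-2))) ∂μ
        ≤ ∫⁻ ω, ENNReal.ofReal (p ^ (1-p) / (1-p)) * Z ω ^ p ∂μ :=
          lintegral_mono fun ω => P3 hp0 hp1 (Z ω)
      _ = ENNReal.ofReal (p ^ (1-p) / (1-p)) * A :=
          lintegral_const_mul' _ _ ENNReal.ofReal_ne_top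
  -- Step 4: second term (the tail part)
  have key4 : ∫⁻ c in Ioi (0:ℝ),
        μ {ω | ENNReal.ofReal (p*c) ≤ Z ω} * ENNReal.ofReal (p * c ^ (p-1))
      ≤ ENNReal.ofReal (p ^ (-p)) * A := by
    have e2 : ∫⁻ c in Ioi (0:ℝ),
          μ {ω | ENNReal.ofReal (p*c) ≤ Z ω} * ENNReal.ofReal (p * c ^ (p-1))
        = ∫⁻ c in Ioi (0:ℝ), (∫⁻ ω,
            (if ENNReal.ofReal (p*c) ≤ Z ω then ENNReal.ofReal (p * c ^ (p-1)) else 0) ∂μ) := by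
      refine lintegral_congr fun c => ?_
      have e : (fun ω => if ENNReal.ofReal (p*c) ≤ Z ω then ENNReal.ofReal (p * c ^ (p-1)) else 0)
          = {ω | ENNReal.ofReal (p*c) ≤ Z ω}.indicator
              fun _ => ENNReal.ofReal (p * c ^ (p-1)) := by
        ext ω; simp [Set.indicator_apply]
      rw [e, lintegral_indicator_const (measurableSet_le measurable_const hZ), mul_comm]
    rw [e2, lintegral_lintegral_swap ?m2]
    case m2 =>
      refine (Measurable.ite (measurableSet_le (by fun_prop) (hZ.comp measurable_snd))
        (by fun_prop) measurable_const).aemeasurable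
    calc ∫⁻ ω, (∫⁻ c in Ioi (0:ℝ),
          (if ENNReal.ofReal (p*c) ≤ Z ω then ENNReal.ofReal (p * c ^ (p-1)) else 0)) ∂μ
        ≤ ∫⁻ ω, ENNReal.ofReal (p ^ (-p)) * Z ω ^ p ∂μ :=
          lintegral_mono fun ω => P2 hp0 hp1 (Z ω)
      _ = ENNReal.ofReal (p ^ (-p)) * A := lintegral_const_mul' _ _ ENNReal.ofReal_ne_top
  -- assemble
  have final : ENNReal.ofReal (p ^ (1-p) / (1-p)) * A + ENNReal.ofReal (p ^ (-p)) * A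
      = ENNReal.ofReal (p ^ (-p) / (1 - p)) * A := by
    rw [← add_mul, ← ENNReal.ofReal_add
      (div_nonneg (Real.rpow_nonneg hp0.le _) (by linarith))
      (Real.rpow_nonneg hp0.le _)]
    congr 2
    have hpow : p ^ (1-p) = p * p ^ (-p) := by
      rw [show (1:ℝ) - p = 1 + -p by ring, Real.rpow_add hp0, Real.rpow_one]
    rw [hpow]
    have h1p : (1:ℝ) - p ≠ 0 := by linarith
    field_simp
    ring
  calc ∫⁻ ω, Y ω ^ p ∂μ
      ≤ _ := key1.trans key2
    _ ≤ ENNReal.ofReal (p ^ (1-p) / (1-p)) * A + ENNReal.ofReal (p ^ (-p)) * A :=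
        add_le_add key3 key4
    _ = ENNReal.ofReal (p ^ (-p) / (1 - p)) * A := final
end

section
/- Counterexample random variable moments: For q, α ∈ (0,1), let S_{q,α} take the value (1-q)^{1-1/α} q^{-1} with probability q and the value −(1-q)^{-1/α} with probability 1−q. Then E[S_{q,α}] = 0, E[((S_{q,α})_-)^α] = 1, and for p ∈ (0,1), E[((S_{q,α})_+)^p] = (1-q)^{p(1-1/α)} q^{1-p}, which tends to +∞ as q → 1. -/
open MeasureTheory Set Filter

lemma two_point_integral {Ω : Type*} {mΩ : MeasurableSpace Ω} (μ : Measure Ω)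
    [IsProbabilityMeasure μ] (S : Ω → ℝ) (hS : Measurable S) (a b qa qb : ℝ)
    (hqa : 0 ≤ qa) (hqb : 0 ≤ qb) (hab : a ≠ b) (hvals : ∀ ω, S ω = a ∨ S ω = b)
    (ha : μ {ω | S ω = a} = ENNReal.ofReal qa) (hb : μ {ω | S ω = b} = ENNReal.ofReal qb)
    (f : ℝ → ℝ) :
    ∫ ω, f (S ω) ∂μ = qa * f a + qb * f b := by
  have hA : MeasurableSet {ω | S ω = a} := hS (measurableSet_singleton a)
  have hB : MeasurableSet {ω | S ω = b} := hS (measurableSet_singleton b)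
  have heq : ∀ ω, f (S ω) =
      Set.indicator {ω | S ω = a} (fun _ => f a) ω
        + Set.indicator {ω | S ω = b} (fun _ => f b) ω := by
    intro ω
    rcases hvals ω with h | h
    · simp [Set.indicator_apply, Set.mem_setOf_eq, h, hab]
    · simp [Set.indicator_apply, Set.mem_setOf_eq, h, Ne.symm hab]
  have i1 : Integrable (Set.indicator {ω | S ω = a} (fun _ => f a)) μ :=
    (integrable_const (f a)).indicator hA
  have i2 : Integrable (Set.indicator {ω | S ω = b} (fun _ => f b)) μ :=
    (integrable_const (f b)).indicator hB
  calc ∫ ω, f (S ω) ∂μ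
      = ∫ ω, (Set.indicator {ω | S ω = a} (fun _ => f a) ω
          + Set.indicator {ω | S ω = b} (fun _ => f b) ω) ∂μ :=
        integral_congr_ae (Filter.Eventually.of_forall heq)
    _ = qa * f a + qb * f b := by
        rw [integral_add i1 i2, integral_indicator_const _ hA, integral_indicator_const _ hB,
          measureReal_def, measureReal_def, ha, hb, ENNReal.toReal_ofReal hqa, ENNReal.toReal_ofReal hqb, smul_eq_mul, smul_eq_mul]

/-- Counterexample random variable moments: for `q, α ∈ (0,1)`, if `S` takes the value
`(1-q)^(1-1/α) q⁻¹` with probability `q` and `-(1-q)^(-1/α)` with probability `1-q`, then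
`E[S] = 0`, `E[(S₋)^α] = 1`, and for `p ∈ (0,1)`,
`E[(S₊)^p] = (1-q)^(p(1-1/α)) q^(1-p)`, which tends to `+∞` as `q → 1⁻`. -/
theorem counterexample_moments {Ω : Type*} {mΩ : MeasurableSpace Ω} (μ : Measure Ω)
    [IsProbabilityMeasure μ] (q α : ℝ) (hq : q ∈ Set.Ioo (0:ℝ) 1)
    (hα : α ∈ Set.Ioo (0:ℝ) 1) (S : Ω → ℝ) (hS : Measurable S)
    (hvals : ∀ ω, S ω = (1 - q) ^ (1 - 1 / α) / q ∨ S ω = -((1 - q) ^ (-(1 / α))))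
    (hplus : μ {ω | S ω = (1 - q) ^ (1 - 1 / α) / q} = ENNReal.ofReal q)
    (hminus : μ {ω | S ω = -((1 - q) ^ (-(1 / α)))} = ENNReal.ofReal (1 - q)) :
    (∫ ω, S ω ∂μ = 0) ∧
    (∫ ω, (max (-S ω) 0) ^ α ∂μ = 1) ∧
    (∀ p ∈ Set.Ioo (0:ℝ) 1,
      ∫ ω, (max (S ω) 0) ^ p ∂μ = (1 - q) ^ (p * (1 - 1 / α)) * q ^ (1 - p)) ∧
    (∀ p ∈ Set.Ioo (0:ℝ) 1,
      Tendsto (fun q' : ℝ => (1 - q') ^ (p * (1 - 1 / α)) * q' ^ (1 - p))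
        (nhdsWithin 1 (Set.Iio 1)) atTop) := by
  obtain ⟨hq0, hq1⟩ := hq
  obtain ⟨hα0, hα1⟩ := hα
  have ht : (0:ℝ) < 1 - q := by linarith
  have hαne : α ≠ 0 := ne_of_gt hα0
  have ha_pos : 0 < (1 - q) ^ (1 - 1 / α) / q :=
    div_pos (Real.rpow_pos_of_pos ht _) hq0
  have hb_neg : -((1 - q) ^ (-(1 / α))) < 0 := neg_neg_of_pos (Real.rpow_pos_of_pos ht _)
  have hab : (1 - q) ^ (1 - 1 / α) / q ≠ -((1 - q) ^ (-(1 / α))) :=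
    ne_of_gt (hb_neg.trans ha_pos)
  have key := two_point_integral μ S hS _ _ q (1 - q) hq0.le (by linarith) hab hvals hplus hminus
  have e1 : (1 - q) ^ ((1:ℝ) - 1 / α) = (1 - q) * (1 - q) ^ (-(1 / α)) := by
    rw [show (1:ℝ) - 1 / α = 1 + -(1 / α) by ring, Real.rpow_add ht, Real.rpow_one]
  refine ⟨?_, ?_, ?_, ?_⟩
  · have h1 := key id
    simp only [id] at h1
    rw [h1, e1]
    field_simp
    ring
  · have h2 := key (fun x => (max (-x) 0) ^ α)
    rw [h2, max_eq_right (by simpa using ha_pos.le), Real.zero_rpow hαne, mul_zero, zero_add,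
      neg_neg, max_eq_left (Real.rpow_pos_of_pos ht _).le, ← Real.rpow_mul ht.le,
      show -(1 / α) * α = -1 by field_simp, Real.rpow_neg_one,
      mul_inv_cancel₀ (ne_of_gt ht)]
  · rintro p ⟨hp0, hp1⟩
    have h3 := key (fun x => (max x 0) ^ p)
    rw [h3, max_eq_left ha_pos.le, max_eq_right hb_neg.le, Real.zero_rpow (ne_of_gt hp0),
      mul_zero, add_zero, Real.div_rpow (Real.rpow_pos_of_pos ht _).le hq0.le,
      ← Real.rpow_mul ht.le, mul_comm (1 - 1/α) p, Real.rpow_sub hq0, Real.rpow_one]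
    ring
  · rintro p ⟨hp0, hp1⟩
    have hc : p * (1 - 1 / α) < 0 := by
      have h1α : 1 < 1 / α := one_lt_one_div hα0 hα1
      exact mul_neg_of_pos_of_neg hp0 (by linarith)
    have hsub : Tendsto (fun q' : ℝ => 1 - q') (nhdsWithin 1 (Set.Iio 1)) (nhdsWithin 0 (Set.Ioi 0)) := by
      rw [tendsto_nhdsWithin_iff]
      constructor
      · have h0 : Tendsto (fun q' : ℝ => 1 - q') (nhds 1) (nhds (1 - 1)) :=
          tendsto_const_nhds.sub tendsto_id
        simp only [sub_self] at h0
        exact h0.mono_left nhdsWithin_le_nhds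
      · filter_upwards [self_mem_nhdsWithin] with q' hq'
        simp only [Set.mem_Iio] at hq'
        simp only [Set.mem_Ioi]
        linarith
    have hinv : Tendsto (fun q' : ℝ => (1 - q')⁻¹) (nhdsWithin 1 (Set.Iio 1)) atTop :=
      tendsto_inv_nhdsGT_zero.comp hsub
    have hpow : Tendsto (fun q' : ℝ => ((1 - q')⁻¹) ^ (-(p * (1 - 1 / α))))
        (nhdsWithin 1 (Set.Iio 1)) atTop :=
      (tendsto_rpow_atTop (by linarith)).comp hinv
    have heq : ∀ᶠ q' in nhdsWithin (1:ℝ) (Set.Iio 1),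
        ((1 - q')⁻¹) ^ (-(p * (1 - 1 / α))) = (1 - q') ^ (p * (1 - 1 / α)) := by
      filter_upwards [self_mem_nhdsWithin] with q' hq'
      have h0 : (0:ℝ) ≤ 1 - q' := by simp only [Set.mem_Iio] at hq'; linarith
      rw [Real.inv_rpow h0, ← Real.rpow_neg h0, neg_neg]
    have hfirst : Tendsto (fun q' : ℝ => (1 - q') ^ (p * (1 - 1 / α)))
        (nhdsWithin 1 (Set.Iio 1)) atTop := hpow.congr' heq
    have hsecond : Tendsto (fun q' : ℝ => q' ^ (1 - p)) (nhdsWithin (1:ℝ) (Set.Iio 1)) (nhds 1) := by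
      have hcont : ContinuousAt (fun x : ℝ => x ^ (1 - p)) 1 :=
        Real.continuousAt_rpow_const 1 (1 - p) (Or.inl one_ne_zero)
      have := hcont.tendsto
      rw [Real.one_rpow] at this
      exact this.mono_left nhdsWithin_le_nhds
    exact hfirst.atTop_mul_pos one_pos hsecond
end

section
/- No stochastic Gronwall with non-predictable H and moments of order α < 1: for all p, α ∈ (0,1) there is no finite constant c_{p,α} such that E[(Z*_{q,α}(1))^p] ≤ c_{p,α} (E[(H_{q,α}(1))^α])^{p/α} holds for all q ∈ (0,1), where Z_{q,α}(t) = M_{q,α}(t) + H_{q,α}(t), M_{q,α}(t) = 1_{[1,∞)}(t) S_{q,α} is a martingale with E[S_{q,α}] = 0, and H_{q,α}(t) = 1_{[1,∞)}(t)(S_{q,α})_-. -/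
open MeasureTheory Set

lemma two_point_integral_s9 (q : ℝ) (hq0 : 0 < q) (hq1 : q < 1) (f : Bool → ℝ) :
    ∫ ω, f ω ∂((ENNReal.ofReal q) • Measure.dirac true
        + (ENNReal.ofReal (1-q)) • Measure.dirac false) = q * f true + (1-q) * f false := by
  have h1 : IsFiniteMeasure ((ENNReal.ofReal q) • (Measure.dirac true : Measure Bool)) := by
    constructor; simp [lt_top_iff_ne_top]
  have h2 : IsFiniteMeasure ((ENNReal.ofReal (1-q)) • (Measure.dirac false : Measure Bool)) := by
    constructor; simp [lt_top_iff_ne_top]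
  rw [integral_add_measure .of_finite .of_finite,
    integral_smul_measure, integral_smul_measure, integral_dirac, integral_dirac]
  simp [ENNReal.toReal_ofReal hq0.le, ENNReal.toReal_ofReal (by linarith : (0:ℝ) ≤ 1-q)]

/-- No stochastic Gronwall inequality with non-predictable `H` and moments of order `α < 1`:
for `p, α ∈ (0,1)` there is no finite constant `c` such that
`E[(Z*_{q,α}(1))^p] = E[(S_{q,α})₊^p] ≤ c (E[(H_{q,α}(1))^α])^{p/α} = c (E[(S_{q,α})₋^α])^{p/α}`
holds for every `q ∈ (0,1)` and every random variable `S_{q,α}` taking the value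
`(1-q)^(1-1/α) q⁻¹` with probability `q` and `-(1-q)^(-1/α)` with probability `1-q`. -/
theorem no_uniform_stochastic_gronwall (p α : ℝ) (hp : p ∈ Set.Ioo (0:ℝ) 1)
    (hα : α ∈ Set.Ioo (0:ℝ) 1) :
    ¬ ∃ c : ℝ, ∀ (Ω : Type) (mΩ : MeasurableSpace Ω) (μ : Measure Ω),
      IsProbabilityMeasure μ → ∀ (S : Ω → ℝ) (q : ℝ), q ∈ Set.Ioo (0:ℝ) 1 →
        Measurable S →
        (∀ ω, S ω = (1 - q) ^ (1 - 1 / α) / q ∨ S ω = -((1 - q) ^ (-(1 / α)))) →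
        μ {ω | S ω = (1 - q) ^ (1 - 1 / α) / q} = ENNReal.ofReal q →
        ∫ ω, (max (S ω) 0) ^ p ∂μ ≤ c * (∫ ω, (max (-S ω) 0) ^ α ∂μ) ^ (p / α) := by
  obtain ⟨hp0, hp1⟩ := hp
  obtain ⟨hα0, hα1⟩ := hα
  rintro ⟨c, hc⟩
  -- exponent
  set e : ℝ := p * (1/α - 1) with he_def
  have hα1' : 1 < 1/α := (one_lt_one_div hα0 hα1)
  have he : 0 < e := mul_pos hp0 (by linarith)
  set c' : ℝ := max c 0 + 1 with hc'_def
  have hc'1 : 1 ≤ c' := by have := le_max_right c 0; simp only [hc'_def]; linarith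
  have hcc' : c < c' := lt_of_le_of_lt (le_max_left c 0) (by linarith)
  set ε : ℝ := min (1/2) ((2*c') ^ (-(1/e))) with hε_def
  have hpow_pos : (0:ℝ) < (2*c') ^ (-(1/e)) := Real.rpow_pos_of_pos (by linarith) _
  have hε0 : 0 < ε := lt_min (by norm_num) hpow_pos
  have hεhalf : ε ≤ 1/2 := min_le_left _ _
  set q : ℝ := 1 - ε with hq_def
  have hq0 : 0 < q := by simp only [hq_def]; linarith
  have hq1 : q < 1 := by simp only [hq_def]; linarith
  have h1q : 1 - q = ε := by simp [hq_def]
  -- the two-point space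
  set μ : Measure Bool := (ENNReal.ofReal q) • Measure.dirac true
      + (ENNReal.ofReal (1-q)) • Measure.dirac false with hμ_def
  have hprob : IsProbabilityMeasure μ := by
    constructor
    simp only [hμ_def, Measure.add_apply, Measure.smul_apply, smul_eq_mul,
      Measure.dirac_apply_of_mem (mem_univ _), mul_one]
    rw [← ENNReal.ofReal_add hq0.le (by linarith)]
    norm_num
  set a : ℝ := (1 - q) ^ (1 - 1/α) / q with ha_def
  set b : ℝ := (1 - q) ^ (-(1/α)) with hb_def
  have ha_pos : 0 < a := div_pos (Real.rpow_pos_of_pos (by linarith) _) hq0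
  have hb_pos : 0 < b := Real.rpow_pos_of_pos (by linarith) _
  set S : Bool → ℝ := fun ω => if ω then a else -b with hS_def
  have hSmeas : Measurable S := measurable_of_countable S
  have hSval : ∀ ω, S ω = a ∨ S ω = -b := by intro ω; cases ω <;> simp [hS_def]
  have hset : μ {ω | S ω = a} = ENNReal.ofReal q := by
    have : {ω : Bool | S ω = a} = {true} := by
      ext ω; cases ω <;> simp [hS_def] <;> intro h <;> nlinarith
    rw [this]
    simp only [hμ_def, Measure.add_apply, Measure.smul_apply, smul_eq_mul]
    rw [Measure.dirac_apply_of_mem (mem_singleton _),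
      Measure.dirac_apply' _ (measurableSet_singleton _)]
    simp
  have key := hc Bool _ μ hprob S q ⟨hq0, hq1⟩ hSmeas hSval hset
  rw [two_point_integral_s9 q hq0 hq1, two_point_integral_s9 q hq0 hq1] at key
  have hStrue : S true = a := by simp [hS_def]
  have hSfalse : S false = -b := by simp [hS_def]
  rw [hStrue, hSfalse] at key
  simp only [neg_neg] at key
  rw [max_eq_left ha_pos.le, max_eq_right (by linarith : -b ≤ (0:ℝ)),
    max_eq_left hb_pos.le, max_eq_right (by linarith : -a ≤ (0:ℝ))] at key
  rw [Real.zero_rpow hp0.ne', Real.zero_rpow hα0.ne'] at key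
  simp only [mul_zero, add_zero, zero_add] at key
  have hbα : b ^ α = ε⁻¹ := by
    rw [hb_def, h1q, ← Real.rpow_mul hε0.le,
      show -(1/α) * α = -1 by field_simp, Real.rpow_neg_one]
  rw [h1q, hbα, mul_inv_cancel₀ hε0.ne', Real.one_rpow, mul_one] at key
  -- now `key : q * a ^ p ≤ c`; derive a contradiction
  have hqp : (0:ℝ) < q ^ p := Real.rpow_pos_of_pos hq0 p
  have hap : q * a ^ p = ε ^ (-e) * q ^ (1 - p) := by
    rw [ha_def, h1q, Real.div_rpow (Real.rpow_pos_of_pos hε0 _).le hq0.le,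
      ← Real.rpow_mul hε0.le, Real.rpow_sub hq0, Real.rpow_one,
      show (1 - 1/α) * p = -e by rw [he_def]; ring]
    field_simp
  have h2c : 2 * c' ≤ ε ^ (-e) := by
    have h1 : ε ^ e ≤ (2*c')⁻¹ := by
      calc ε ^ e ≤ ((2*c') ^ (-(1/e))) ^ e :=
            Real.rpow_le_rpow hε0.le (min_le_right _ _) he.le
        _ = (2*c') ^ (-(1/e) * e) := (Real.rpow_mul (by linarith) _ _).symm
        _ = (2*c')⁻¹ := by rw [show -(1/e)*e = -1 by field_simp, Real.rpow_neg_one]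
    have h2 := inv_anti₀ (Real.rpow_pos_of_pos hε0 e) h1
    rw [inv_inv] at h2
    rwa [Real.rpow_neg hε0.le]
  have hq2 : (1:ℝ)/2 ≤ q ^ (1-p) := by
    have h := Real.rpow_le_rpow_of_exponent_ge hq0 hq1.le (by linarith : 1 - p ≤ 1)
    rw [Real.rpow_one] at h
    have hqhalf : (1:ℝ)/2 ≤ q := by rw [hq_def]; linarith
    linarith
  have hfin : c' ≤ q * a ^ p := by
    rw [hap]
    calc c' = (2*c') * (1/2) := by ring
      _ ≤ ε^(-e) * q^(1-p) :=
        mul_le_mul h2c hq2 (by norm_num) (Real.rpow_pos_of_pos hε0 _).le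
  linarith
end

section
/- Tail-to-moment conversion: if Y, G are non-negative random variables with P(Y > c) ≤ (1/c) E[G ∧ λc] + P(G ≥ λc) for all c > 0 and a fixed λ > 0, then E[Y^p] ≤ (λ^{1-p}/(1-p) + λ^{-p})·E[G^p] for every p ∈ (0,1). -/
open MeasureTheory Set
open scoped ENNReal

/-- ENNReal layercake with strict inequality. -/
lemma my_layercake_lt {Ω : Type*} {mΩ : MeasurableSpace Ω} (μ : Measure Ω) [SFinite μ]
    {f : Ω → ℝ≥0∞} (hf : Measurable f) :
    ∫⁻ ω, f ω ∂μ = ∫⁻ c in Set.Ioi (0:ℝ), μ {ω | ENNReal.ofReal c < f ω} := by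
  have hset : MeasurableSet {q : ℝ × Ω | ENNReal.ofReal q.1 < f q.2} :=
    measurableSet_lt (ENNReal.measurable_ofReal.comp measurable_fst) (hf.comp measurable_snd)
  have hFm : Measurable fun q : ℝ × Ω => (if ENNReal.ofReal q.1 < f q.2 then (1:ℝ≥0∞) else 0) :=
    Measurable.ite hset measurable_const measurable_const
  have step1 : ∫⁻ c in Set.Ioi (0:ℝ), μ {ω | ENNReal.ofReal c < f ω}
      = ∫⁻ c in Set.Ioi (0:ℝ), ∫⁻ ω, (if ENNReal.ofReal c < f ω then (1:ℝ≥0∞) else 0) ∂μ := by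
    refine lintegral_congr fun c => ?_
    have hs : MeasurableSet {ω | ENNReal.ofReal c < f ω} := measurableSet_lt measurable_const hf
    rw [← lintegral_indicator_one hs]
    refine lintegral_congr fun ω => ?_
    simp [Set.indicator_apply]
  have swap : ∫⁻ c in Set.Ioi (0:ℝ), ∫⁻ ω, (if ENNReal.ofReal c < f ω then (1:ℝ≥0∞) else 0) ∂μ
      = ∫⁻ ω, (∫⁻ c in Set.Ioi (0:ℝ), (if ENNReal.ofReal c < f ω then (1:ℝ≥0∞) else 0)) ∂μ :=
    lintegral_lintegral_swap hFm.aemeasurable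
  rw [step1, swap]
  refine (lintegral_congr fun ω => ?_).symm
  have : ∫⁻ c in Set.Ioi (0:ℝ), (if ENNReal.ofReal c < f ω then (1:ℝ≥0∞) else 0)
      = volume ({c : ℝ | ENNReal.ofReal c < f ω} ∩ Set.Ioi 0) := by
    rw [← Measure.restrict_apply (measurableSet_lt (ENNReal.measurable_ofReal) measurable_const),
      ← lintegral_indicator_one
        (measurableSet_lt (ENNReal.measurable_ofReal) measurable_const)]
    refine lintegral_congr fun c => ?_
    simp [Set.indicator_apply]
  rw [this]
  rcases eq_or_ne (f ω) ∞ with hx | hx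
  · have : {c : ℝ | ENNReal.ofReal c < f ω} = Set.univ :=
      Set.eq_univ_of_forall fun c => hx ▸ ENNReal.ofReal_lt_top
    rw [this, Set.univ_inter, Real.volume_Ioi, hx]
  · have : {c : ℝ | ENNReal.ofReal c < f ω} ∩ Set.Ioi 0 = Set.Ioo 0 (f ω).toReal := by
      ext c
      simp only [Set.mem_inter_iff, Set.mem_setOf_eq, Set.mem_Ioi, Set.mem_Ioo]
      constructor
      · rintro ⟨h1, h2⟩; exact ⟨h2, (ENNReal.ofReal_lt_iff_lt_toReal (le_of_lt h2) hx).mp h1⟩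
      · rintro ⟨h1, h2⟩; exact ⟨(ENNReal.ofReal_lt_iff_lt_toReal (le_of_lt h1) hx).mpr h2, h1⟩
    rw [this, Real.volume_Ioo, sub_zero, ENNReal.ofReal_toReal hx]

/-- ENNReal layercake with non-strict inequality. -/
lemma my_layercake_le {Ω : Type*} {mΩ : MeasurableSpace Ω} (μ : Measure Ω) [SFinite μ]
    {f : Ω → ℝ≥0∞} (hf : Measurable f) :
    ∫⁻ ω, f ω ∂μ = ∫⁻ c in Set.Ioi (0:ℝ), μ {ω | ENNReal.ofReal c ≤ f ω} := by
  have hset : MeasurableSet {q : ℝ × Ω | ENNReal.ofReal q.1 ≤ f q.2} :=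
    measurableSet_le (ENNReal.measurable_ofReal.comp measurable_fst) (hf.comp measurable_snd)
  have hFm : Measurable fun q : ℝ × Ω => (if ENNReal.ofReal q.1 ≤ f q.2 then (1:ℝ≥0∞) else 0) :=
    Measurable.ite hset measurable_const measurable_const
  have step1 : ∫⁻ c in Set.Ioi (0:ℝ), μ {ω | ENNReal.ofReal c ≤ f ω}
      = ∫⁻ c in Set.Ioi (0:ℝ), ∫⁻ ω, (if ENNReal.ofReal c ≤ f ω then (1:ℝ≥0∞) else 0) ∂μ := by
    refine lintegral_congr fun c => ?_
    have hs : MeasurableSet {ω | ENNReal.ofReal c ≤ f ω} := measurableSet_le measurable_const hf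
    rw [← lintegral_indicator_one hs]
    refine lintegral_congr fun ω => ?_
    simp [Set.indicator_apply]
  have swap : ∫⁻ c in Set.Ioi (0:ℝ), ∫⁻ ω, (if ENNReal.ofReal c ≤ f ω then (1:ℝ≥0∞) else 0) ∂μ
      = ∫⁻ ω, (∫⁻ c in Set.Ioi (0:ℝ), (if ENNReal.ofReal c ≤ f ω then (1:ℝ≥0∞) else 0)) ∂μ :=
    lintegral_lintegral_swap hFm.aemeasurable
  rw [step1, swap]
  refine (lintegral_congr fun ω => ?_).symm
  have : ∫⁻ c in Set.Ioi (0:ℝ), (if ENNReal.ofReal c ≤ f ω then (1:ℝ≥0∞) else 0)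
      = volume ({c : ℝ | ENNReal.ofReal c ≤ f ω} ∩ Set.Ioi 0) := by
    rw [← Measure.restrict_apply (measurableSet_le (ENNReal.measurable_ofReal) measurable_const),
      ← lintegral_indicator_one
        (measurableSet_le (ENNReal.measurable_ofReal) measurable_const)]
    refine lintegral_congr fun c => ?_
    simp [Set.indicator_apply]
  rw [this]
  rcases eq_or_ne (f ω) ∞ with hx | hx
  · have : {c : ℝ | ENNReal.ofReal c ≤ f ω} = Set.univ :=
      Set.eq_univ_of_forall fun c => by show ENNReal.ofReal c ≤ f ω; rw [hx]; exact le_top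
    rw [this, Set.univ_inter, Real.volume_Ioi, hx]
  · have : {c : ℝ | ENNReal.ofReal c ≤ f ω} ∩ Set.Ioi 0 = Set.Ioc 0 (f ω).toReal := by
      ext c
      simp only [Set.mem_inter_iff, Set.mem_setOf_eq, Set.mem_Ioi, Set.mem_Ioc]
      constructor
      · rintro ⟨h1, h2⟩; exact ⟨h2, (ENNReal.ofReal_le_iff_le_toReal hx).mp h1⟩
      · rintro ⟨h1, h2⟩; exact ⟨(ENNReal.ofReal_le_iff_le_toReal hx).mpr h2, h1⟩
    rw [this, Real.volume_Ioc, sub_zero, ENNReal.ofReal_toReal hx]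

/-- The inner calculus bound. -/
lemma my_inner_bound {l p : ℝ} (hl : 0 < l) (hp0 : 0 < p) (hp1 : p < 1) (g : ℝ≥0∞) :
    ∫⁻ c in Set.Ioi (0:ℝ),
        (ENNReal.ofReal (c ^ (1/p)))⁻¹ * min g (ENNReal.ofReal (l * c ^ (1/p)))
      ≤ ENNReal.ofReal (l ^ (1 - p) / (1 - p)) * g ^ p := by
  have h1p : 0 < 1 - p := by linarith
  have hcoef : (0:ℝ) < l ^ (1 - p) / (1 - p) := by positivity
  rcases eq_or_ne g ∞ with hg | hg
  · rw [hg, ENNReal.top_rpow_of_pos hp0, ENNReal.mul_top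
      (ne_of_gt (ENNReal.ofReal_pos.mpr hcoef))]
    exact le_top
  rcases eq_or_ne g 0 with hg0 | hg0
  · have hmin : ∀ x : ℝ≥0∞, min g x = 0 := fun x => by rw [hg0]; exact min_eq_left (zero_le : (0:ℝ≥0∞) ≤ x)
    simp [hmin]
  set Gr := g.toReal with hGrdef
  have hGr0 : 0 < Gr := ENNReal.toReal_pos hg0 hg
  set T := (Gr / l) ^ p with hTdef
  have hT0 : 0 < T := by positivity
  have hgeq : g = ENNReal.ofReal Gr := (ENNReal.ofReal_toReal hg).symm
  have hTq : T ^ (1/p) = Gr / l := by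
    rw [hTdef, ← Real.rpow_mul (by positivity), mul_one_div, div_self (ne_of_gt hp0),
      Real.rpow_one]
  have hsplit : Set.Ioi (0:ℝ) = Set.Ioc 0 T ∪ Set.Ioi T := (Set.Ioc_union_Ioi_eq_Ioi hT0.le).symm
  rw [hsplit, lintegral_union measurableSet_Ioi (Set.Ioc_disjoint_Ioi le_rfl)]
  -- Part 1
  have part1 : ∫⁻ c in Set.Ioc (0:ℝ) T,
      (ENNReal.ofReal (c ^ (1/p)))⁻¹ * min g (ENNReal.ofReal (l * c ^ (1/p)))
      = ENNReal.ofReal (l * T) := by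
    have e1 : ∀ c ∈ Set.Ioc (0:ℝ) T,
        (ENNReal.ofReal (c ^ (1/p)))⁻¹ * min g (ENNReal.ofReal (l * c ^ (1/p)))
          = ENNReal.ofReal l := by
      rintro c ⟨hc0, hcT⟩
      have hcq : 0 < c ^ (1/p) := Real.rpow_pos_of_pos hc0 _
      have hle : l * c ^ (1/p) ≤ Gr := by
        have h1 : c ^ (1/p) ≤ T ^ (1/p) :=
          Real.rpow_le_rpow hc0.le hcT (by positivity)
        rw [hTq] at h1
        calc l * c ^ (1/p) ≤ l * (Gr / l) :=
              mul_le_mul_of_nonneg_left h1 hl.le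
          _ = Gr := by field_simp
      rw [min_eq_right (hgeq ▸ ENNReal.ofReal_le_ofReal hle), ENNReal.ofReal_mul hl.le]
      rw [show (ENNReal.ofReal (c ^ (1/p)))⁻¹ * (ENNReal.ofReal l * ENNReal.ofReal (c ^ (1/p)))
          = ENNReal.ofReal l * (ENNReal.ofReal (c ^ (1/p)) * (ENNReal.ofReal (c ^ (1/p)))⁻¹)
          by ring, ENNReal.mul_inv_cancel (ne_of_gt (ENNReal.ofReal_pos.mpr hcq))
            ENNReal.ofReal_ne_top, mul_one]
    rw [setLIntegral_congr_fun measurableSet_Ioc e1, setLIntegral_const,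
      Real.volume_Ioc, sub_zero, ← ENNReal.ofReal_mul hl.le]
  -- Part 2
  have hexp : -(1/p) < -1 := by
    have := one_lt_one_div hp0 hp1
    linarith
  have part2 : ∫⁻ c in Set.Ioi T,
      (ENNReal.ofReal (c ^ (1/p)))⁻¹ * min g (ENNReal.ofReal (l * c ^ (1/p)))
      = ENNReal.ofReal (Gr * (-T ^ (-(1/p) + 1) / (-(1/p) + 1))) := by
    have e2 : ∀ c ∈ Set.Ioi T,
        (ENNReal.ofReal (c ^ (1/p)))⁻¹ * min g (ENNReal.ofReal (l * c ^ (1/p)))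
          = ENNReal.ofReal (Gr * c ^ (-(1/p))) := by
      intro c hc
      have hc0 : 0 < c := hT0.trans hc
      have hcq : 0 < c ^ (1/p) := Real.rpow_pos_of_pos hc0 _
      have hge : Gr ≤ l * c ^ (1/p) := by
        have h1 : T ^ (1/p) ≤ c ^ (1/p) :=
          Real.rpow_le_rpow hT0.le (le_of_lt hc) (by positivity)
        rw [hTq] at h1
        calc Gr = l * (Gr / l) := by field_simp
          _ ≤ l * c ^ (1/p) := mul_le_mul_of_nonneg_left h1 hl.le
      rw [min_eq_left (hgeq ▸ ENNReal.ofReal_le_ofReal hge)]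
      rw [hgeq, ← ENNReal.ofReal_inv_of_pos hcq, ← ENNReal.ofReal_mul (by positivity),
        Real.rpow_neg hc0.le, mul_comm]
    rw [setLIntegral_congr_fun measurableSet_Ioi e2]
    have hint : IntegrableOn (fun c : ℝ => Gr * c ^ (-(1/p))) (Set.Ioi T) :=
      (integrableOn_Ioi_rpow_of_lt hexp hT0).const_mul Gr
    rw [← ofReal_integral_eq_lintegral_ofReal hint
      ((ae_restrict_iff' measurableSet_Ioi).mpr (ae_of_all _ fun c hc => by
        have hc0 : (0:ℝ) < c := hT0.trans hc
        positivity))]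
    rw [MeasureTheory.integral_const_mul, integral_Ioi_rpow_of_lt hexp hT0]
  rw [part1, part2]
  -- Now the real computation
  have hA : T ^ (-(1/p) + 1) = l ^ (1 - p) * Gr ^ (p - 1) := by
    rw [hTdef, ← Real.rpow_mul (by positivity)]
    have : p * (-(1/p) + 1) = p - 1 := by field_simp; ring
    rw [this, Real.div_rpow hGr0.le hl.le,
      show (1:ℝ) - p = -(p-1) by ring, Real.rpow_neg hl.le]
    ring
  have hB : l * T = l ^ (1 - p) * Gr ^ p := by
    rw [hTdef, Real.div_rpow hGr0.le hl.le, Real.rpow_sub hl, Real.rpow_one]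
    ring
  have hC : Gr ^ p = Gr * Gr ^ (p - 1) := by
    rw [show p = 1 + (p - 1) by ring, Real.rpow_add hGr0, Real.rpow_one]
    ring_nf
  have hgp : g ^ p = ENNReal.ofReal (Gr ^ p) := by
    rw [hgeq, ENNReal.ofReal_rpow_of_pos hGr0]
  have hnegexp : -(1/p) + 1 < 0 := by
    have h1 : 1 < 1/p := one_lt_one_div hp0 hp1
    linarith
  have hpart2nn : 0 ≤ Gr * (-T ^ (-(1/p) + 1) / (-(1/p) + 1)) := by
    have hTpos := Real.rpow_pos_of_pos hT0 (-(1/p) + 1)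
    have : 0 < -T ^ (-(1/p) + 1) / (-(1/p) + 1) :=
      div_pos_of_neg_of_neg (by linarith) hnegexp
    positivity
  rw [hgp, ← ENNReal.ofReal_mul hcoef.le, ← ENNReal.ofReal_add (by positivity) hpart2nn]
  refine ENNReal.ofReal_le_ofReal (le_of_eq ?_)
  rw [hA, hB, hC]
  have hne : -(1/p) + 1 ≠ 0 := by
    have h1 : 1 < 1/p := one_lt_one_div hp0 hp1
    intro hcon; linarith
  have hm1p : (-1:ℝ) + p ≠ 0 := by intro hcon; linarith
  field_simp [hm1p]
  ring

/-- Tail-to-moment conversion: if `Y, G` are non-negative random variables with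
`P(Y > c) ≤ c⁻¹ E[G ∧ λc] + P(G ≥ λc)` for all `c > 0` and a fixed `λ > 0`, then
`E[Y^p] ≤ (λ^(1-p)/(1-p) + λ^(-p)) E[G^p]` for every `p ∈ (0,1)`. -/
theorem tail_to_moment_fixed_lambda {Ω : Type*} {mΩ : MeasurableSpace Ω} (μ : Measure Ω)
    [IsProbabilityMeasure μ] (Y G : Ω → ℝ≥0∞) (hY : Measurable Y) (hG : Measurable G)
    (l : ℝ) (hl : 0 < l)
    (h : ∀ c : ℝ, 0 < c →
      μ {ω | ENNReal.ofReal c < Y ω}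
        ≤ (ENNReal.ofReal c)⁻¹ * ∫⁻ ω, min (G ω) (ENNReal.ofReal (l * c)) ∂μ
          + μ {ω | ENNReal.ofReal (l * c) ≤ G ω})
    (p : ℝ) (hp : p ∈ Set.Ioo (0:ℝ) 1) :
    ∫⁻ ω, Y ω ^ p ∂μ
      ≤ ENNReal.ofReal (l ^ (1 - p) / (1 - p) + l ^ (-p)) * ∫⁻ ω, G ω ^ p ∂μ := by
  obtain ⟨hp0, hp1⟩ := hp
  have h1p : 0 < 1 - p := by linarith
  have hq0 : 0 < 1/p := by positivity
  have hYp : Measurable fun ω => Y ω ^ p := hY.pow_const p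
  -- layercake for Y^p
  rw [my_layercake_lt μ hYp]
  -- rewrite tail sets
  have hsets : ∀ c ∈ Set.Ioi (0:ℝ),
      μ {ω | ENNReal.ofReal c < Y ω ^ p}
        ≤ (ENNReal.ofReal (c ^ (1/p)))⁻¹
            * ∫⁻ ω, min (G ω) (ENNReal.ofReal (l * c ^ (1/p))) ∂μ
          + μ {ω | ENNReal.ofReal (l * c ^ (1/p)) ≤ G ω} := by
    intro c hc
    have hc0 : (0:ℝ) < c := hc
    have hseteq : {ω | ENNReal.ofReal c < Y ω ^ p}
        = {ω | ENNReal.ofReal (c ^ (1/p)) < Y ω} := by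
      ext ω
      simp only [Set.mem_setOf_eq]
      rw [← ENNReal.ofReal_rpow_of_pos hc0]
      constructor
      · intro h'
        have h2 := (ENNReal.rpow_lt_rpow_iff hq0).mpr h'
        rwa [← ENNReal.rpow_mul, mul_one_div, div_self (ne_of_gt hp0), ENNReal.rpow_one] at h2
      · intro h'
        have h2 := (ENNReal.rpow_lt_rpow_iff hp0).mpr h'
        rwa [← ENNReal.rpow_mul, one_div, inv_mul_cancel₀ (ne_of_gt hp0),
          ENNReal.rpow_one] at h2
    rw [hseteq]
    exact h (c ^ (1/p)) (by positivity)
  refine le_trans (setLIntegral_mono' measurableSet_Ioi hsets) ?_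
  -- split the integral
  set A : ℝ → ℝ≥0∞ := fun c => (ENNReal.ofReal (c ^ (1/p)))⁻¹
      * ∫⁻ ω, min (G ω) (ENNReal.ofReal (l * c ^ (1/p))) ∂μ with hAdef
  set B : ℝ → ℝ≥0∞ := fun c => μ {ω | ENNReal.ofReal (l * c ^ (1/p)) ≤ G ω} with hBdef
  have hrpow_meas : Measurable fun c : ℝ => c ^ (1/p) :=
    measurable_id.pow_const (1/p)
  have hAmeas : Measurable A := by
    have hmono : Monotone fun t : ℝ => ∫⁻ ω, min (G ω) (ENNReal.ofReal (l * t)) ∂μ :=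
      fun s t hst => lintegral_mono fun ω =>
        min_le_min le_rfl (ENNReal.ofReal_le_ofReal (by nlinarith))
    exact ((ENNReal.measurable_ofReal.comp hrpow_meas).inv).mul
      (hmono.measurable.comp hrpow_meas)
  have hsplitint : ∫⁻ c in Set.Ioi (0:ℝ), (A c + B c)
      = (∫⁻ c in Set.Ioi (0:ℝ), A c) + ∫⁻ c in Set.Ioi (0:ℝ), B c :=
    lintegral_add_left hAmeas B
  rw [hsplitint]
  -- bound ∫ A
  have hAbound : ∫⁻ c in Set.Ioi (0:ℝ), A c
      ≤ ENNReal.ofReal (l ^ (1 - p) / (1 - p)) * ∫⁻ ω, G ω ^ p ∂μ := by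
    have hAeq : ∀ c ∈ Set.Ioi (0:ℝ), A c
        = ∫⁻ ω, (ENNReal.ofReal (c ^ (1/p)))⁻¹
            * min (G ω) (ENNReal.ofReal (l * c ^ (1/p))) ∂μ := by
      intro c hc
      have hcq : 0 < c ^ (1/p) := Real.rpow_pos_of_pos hc _
      exact (lintegral_const_mul' _ _
        (ENNReal.inv_ne_top.mpr (ne_of_gt (ENNReal.ofReal_pos.mpr hcq)))).symm
    rw [setLIntegral_congr_fun measurableSet_Ioi hAeq]
    have hFmeas : Measurable (Function.uncurry fun (c : ℝ) (ω : Ω) =>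
        (ENNReal.ofReal (c ^ (1/p)))⁻¹ * min (G ω) (ENNReal.ofReal (l * c ^ (1/p)))) := by
      apply Measurable.mul
      · exact ((ENNReal.measurable_ofReal.comp (hrpow_meas.comp measurable_fst))).inv
      · exact (hG.comp measurable_snd).min
          (ENNReal.measurable_ofReal.comp
            ((measurable_const.mul (hrpow_meas.comp measurable_fst))))
    rw [lintegral_lintegral_swap hFmeas.aemeasurable]
    refine le_trans (lintegral_mono fun ω => my_inner_bound hl hp0 hp1 (G ω)) ?_
    rw [lintegral_const_mul' _ _ ENNReal.ofReal_ne_top]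
  -- bound ∫ B
  have hBbound : ∫⁻ c in Set.Ioi (0:ℝ), B c
      ≤ ENNReal.ofReal (l ^ (-p)) * ∫⁻ ω, G ω ^ p ∂μ := by
    set H : Ω → ℝ≥0∞ := fun ω => (G ω * (ENNReal.ofReal l)⁻¹) ^ p with hHdef
    have hHmeas : Measurable H := (hG.mul_const _).pow_const p
    have hdom : ∀ c ∈ Set.Ioi (0:ℝ), B c ≤ μ {ω | ENNReal.ofReal c ≤ H ω} := by
      intro c hc
      refine measure_mono fun ω hω => ?_
      simp only [Set.mem_setOf_eq] at hω ⊢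
      have h1 : ENNReal.ofReal (c ^ (1/p)) ≤ G ω * (ENNReal.ofReal l)⁻¹ := by
        have h2 : ENNReal.ofReal (l * c ^ (1/p)) * (ENNReal.ofReal l)⁻¹
            ≤ G ω * (ENNReal.ofReal l)⁻¹ :=
          mul_le_mul_left hω _
        rwa [ENNReal.ofReal_mul hl.le, mul_comm (ENNReal.ofReal l), mul_assoc,
          ENNReal.mul_inv_cancel (ne_of_gt (ENNReal.ofReal_pos.mpr hl))
            ENNReal.ofReal_ne_top, mul_one] at h2
      have h3 : (ENNReal.ofReal (c ^ (1/p))) ^ p ≤ H ω :=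
        ENNReal.rpow_le_rpow h1 hp0.le
      rwa [ENNReal.ofReal_rpow_of_pos (Real.rpow_pos_of_pos hc _),
        ← Real.rpow_mul (le_of_lt hc), one_div, inv_mul_cancel₀ (ne_of_gt hp0),
        Real.rpow_one] at h3
    refine le_trans (setLIntegral_mono' measurableSet_Ioi hdom) ?_
    rw [← my_layercake_le μ hHmeas]
    have hHval : ∀ ω, H ω = ENNReal.ofReal (l ^ (-p)) * G ω ^ p := by
      intro ω
      show (G ω * (ENNReal.ofReal l)⁻¹) ^ p = _
      rw [ENNReal.mul_rpow_of_nonneg _ _ hp0.le, mul_comm]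
      congr 1
      rw [← ENNReal.ofReal_inv_of_pos hl, ENNReal.ofReal_rpow_of_pos (by positivity),
        ← Real.rpow_neg_one, ← Real.rpow_mul hl.le]
      norm_num
    rw [lintegral_congr hHval, lintegral_const_mul' _ _ ENNReal.ofReal_ne_top]
  refine le_trans (add_le_add hAbound hBbound) ?_
  rw [ENNReal.ofReal_add (by positivity) (by positivity), add_mul]
end
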